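/- For all a ≠ b in {1,…,N} and every λ ∈ Ω, the End(V)-valued function λ ↦ ρ(L_a(z;λ)) is differentiable in λ_b on Ω, and the λ-derivative terms arising in the commutator of the dynamical operators cancel: λ_b · ∂/∂λ_b ρ(L_a(z;λ)) = λ_a · ∂/∂λ_a ρ(L_b(z;λ)); explicitly, both sides equal −λ_a λ_b (λ_a−λ_b)^{−2} ρ(E_{a,b}E_{b,a} − E_{a,a}) = −λ_a λ_b (λ_a−λ_b)^{−2} ρ(E_{b,a}E_{a,b} − E_{b,b}). -/

import Mathlib

open scoped TensorProduct

attribute [local instance 100] LieRing.ofAssociativeRing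

noncomputable section

/-- The Lie algebra `gl_N` of `N×N` complex matrices. -/
abbrev gl (N : ℕ) := Matrix (Fin N) (Fin N) ℂ

/-- Its universal enveloping algebra `U = U(gl_N)` over `ℂ`. -/
abbrev UEA (N : ℕ) := UniversalEnvelopingAlgebra ℂ (gl N)

/-- `A = U ⊗ ⋯ ⊗ U` (`n` factors). -/
abbrev Atp (N n : ℕ) := ⨂[ℂ] (_ : Fin n), UEA N

/-- `e^{(i)}_{a,b}`: the matrix unit `e_{a,b}` placed in the `i`-th tensor factor. -/
def eF {N n : ℕ} (i : Fin n) (a b : Fin N) : Atp N n :=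
  PiTensorProduct.singleAlgHom i
    (UniversalEnvelopingAlgebra.ι ℂ (Matrix.single a b (1 : ℂ)))

/-- `E_{a,b} = Σ_i e^{(i)}_{a,b}`. -/
def EF {N n : ℕ} (a b : Fin N) : Atp N n := ∑ i, eF i a b

/-- The coefficient `L_a(z;λ)` of the dynamical operator `D_a`. -/
def LF {N n : ℕ} (z : Fin n → ℂ) (lam : Fin N → ℂ) (a : Fin N) : Atp N n :=
  (2⁻¹ : ℂ) • (EF a a) ^ 2
  - ∑ i, z i • eF i a a
  - ∑ b : Fin N, ∑ i : Fin n, ∑ j : Fin n, (if i < j then eF i a b * eF j b a else 0)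
  - ∑ b ∈ Finset.univ.erase a, (lam b / (lam a - lam b)) • (EF a b * EF b a - EF a a)

/-- `Ω = {λ ∈ ℂ^N : λ_1,…,λ_N nonzero and pairwise distinct}`. -/
def Om (N : ℕ) : Set (Fin N → ℂ) :=
  {lam | (∀ a, lam a ≠ 0) ∧ Function.Injective lam}

/-- Elements placed in distinct tensor factors commute. -/
lemma eF_commute_ne {N n : ℕ} {i j : Fin n} (h : i ≠ j) (a b c d : Fin N) :
    Commute (eF i a b) (eF (n := n) j c d) := by
  unfold eF
  simp only [PiTensorProduct.singleAlgHom_apply]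
  exact Commute.tprod (Pi.mulSingle_commute h _ _)

/-- The single-factor commutator identity coming from `⁅e_{ab}, e_{ba}⁆ = e_{aa} - e_{bb}`. -/
lemma eF_comm_same {N n : ℕ} (i : Fin n) (a b : Fin N) (hab : a ≠ b) :
    eF i a b * eF i b a - eF i b a * eF i a b = eF i a a - eF i b b := by
  have h2 : Matrix.single a b (1 : ℂ) * Matrix.single b a 1
      = Matrix.single a a 1 := by
    rw [Matrix.single_mul_single_same, one_mul]
  have h3 : Matrix.single b a (1 : ℂ) * Matrix.single a b 1
      = Matrix.single b b 1 := by
    rw [Matrix.single_mul_single_same, one_mul]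
  have hlie : (UniversalEnvelopingAlgebra.ι ℂ (Matrix.single a b (1 : ℂ)))
        * UniversalEnvelopingAlgebra.ι ℂ (Matrix.single b a 1)
      - UniversalEnvelopingAlgebra.ι ℂ (Matrix.single b a 1)
        * UniversalEnvelopingAlgebra.ι ℂ (Matrix.single a b 1)
      = UniversalEnvelopingAlgebra.ι ℂ (Matrix.single a a 1)
        - UniversalEnvelopingAlgebra.ι ℂ (Matrix.single b b 1) := by
    calc _ = ⁅UniversalEnvelopingAlgebra.ι ℂ (Matrix.single a b (1 : ℂ)),
              UniversalEnvelopingAlgebra.ι ℂ (Matrix.single b a 1)⁆ :=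
          (Ring.lie_def _ _).symm
      _ = UniversalEnvelopingAlgebra.ι ℂ
            ⁅Matrix.single a b (1 : ℂ), Matrix.single b a 1⁆ :=
          (LieHom.map_lie _ _ _).symm
      _ = _ := by rw [Ring.lie_def, h2, h3, map_sub]
  have e1 : eF i a b * eF i b a - eF i b a * eF i a b
      = (PiTensorProduct.singleAlgHom (R := ℂ) i)
          ((UniversalEnvelopingAlgebra.ι ℂ (Matrix.single a b (1 : ℂ)))
              * UniversalEnvelopingAlgebra.ι ℂ (Matrix.single b a 1)
            - (UniversalEnvelopingAlgebra.ι ℂ (Matrix.single b a 1))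
              * UniversalEnvelopingAlgebra.ι ℂ (Matrix.single a b 1)) := by
    rw [map_sub, map_mul, map_mul]; rfl
  rw [e1, hlie, map_sub]; rfl

/-- `[E_{ab}, E_{ba}] = E_{aa} - E_{bb}`. -/
lemma EF_comm_key {N n : ℕ} (a b : Fin N) (hab : a ≠ b) :
    EF (n := n) a b * EF b a - EF b a * EF a b = EF a a - EF b b := by
  unfold EF
  rw [Finset.sum_mul_sum, Finset.sum_mul_sum, Finset.sum_comm (f := fun j i => eF j b a * eF i a b),
    ← Finset.sum_sub_distrib]
  have : ∀ i ∈ (Finset.univ : Finset (Fin n)),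
      (∑ j, eF i a b * eF j b a) - (∑ j, eF j b a * eF i a b)
        = eF i a a - eF i b b := by
    intro i _
    rw [← Finset.sum_sub_distrib]
    rw [Finset.sum_eq_single i]
    · exact eF_comm_same i a b hab
    · intro j _ hji
      rw [(eF_commute_ne (Ne.symm hji) a b b a).eq, sub_self]
    · intro h; exact absurd (Finset.mem_univ i) h
  rw [Finset.sum_congr rfl this, Finset.sum_sub_distrib]

lemma EF_comm {N n : ℕ} (a b : Fin N) (hab : a ≠ b) :
    EF (n := n) a b * EF b a - EF a a = EF b a * EF a b - EF b b := by
  have key := EF_comm_key (n := n) a b hab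
  rw [sub_eq_sub_iff_sub_eq_sub]
  exact key

/-- The dependence of `L_a` on `λ_b` is isolated in a single rational term. -/
lemma LF_update {N n : ℕ} (z : Fin n → ℂ) (lam : Fin N → ℂ) (a b : Fin N) (hab : b ≠ a)
    (t : ℂ) :
    LF z (Function.update lam b t) a
      = LF z (Function.update lam b 0) a
        - (t / (lam a - t)) • (EF a b * EF b a - EF a a) := by
  have hb : b ∈ Finset.univ.erase a := Finset.mem_erase.mpr ⟨hab, Finset.mem_univ b⟩
  unfold LF
  have key : ∀ s : ℂ, (∑ c ∈ Finset.univ.erase a,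
      (Function.update lam b s c / (Function.update lam b s a - Function.update lam b s c)) •
        (EF (n := n) a c * EF c a - EF a a))
      = (s / (lam a - s)) • (EF a b * EF b a - EF a a)
        + ∑ c ∈ (Finset.univ.erase a).erase b,
            (lam c / (lam a - lam c)) • (EF a c * EF c a - EF a a) := by
    intro s
    rw [← Finset.add_sum_erase _ _ hb]
    congr 1
    · rw [Function.update_self, Function.update_of_ne (Ne.symm hab)]
    · refine Finset.sum_congr rfl fun c hc => ?_
      have hcb : c ≠ b := (Finset.mem_erase.mp hc).1
      rw [Function.update_of_ne hcb, Function.update_of_ne (Ne.symm hab)]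
  rw [key t, key 0]
  simp only [zero_div, zero_smul, zero_add]
  abel

theorem dynamical_derivative_terms_cancel {N n : ℕ}
    (z : Fin n → ℂ) (lam : Fin N → ℂ) (hlam : lam ∈ Om N)
    (V : Type*) [NormedAddCommGroup V] [NormedSpace ℂ V] [FiniteDimensional ℂ V]
    (ρ : Atp N n →ₐ[ℂ] (V →L[ℂ] V)) (a b : Fin N) (hab : a ≠ b) :
    ∃ Da Db : V →L[ℂ] V,
      HasDerivAt (fun t : ℂ => ρ (LF z (Function.update lam b t) a)) Da (lam b) ∧
      HasDerivAt (fun t : ℂ => ρ (LF z (Function.update lam a t) b)) Db (lam a) ∧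
      lam b • Da = lam a • Db ∧
      lam b • Da
        = (-(lam a * lam b) * ((lam a - lam b) ^ 2)⁻¹) • ρ (EF a b * EF b a - EF a a) ∧
      (-(lam a * lam b) * ((lam a - lam b) ^ 2)⁻¹) • ρ (EF a b * EF b a - EF a a)
        = (-(lam a * lam b) * ((lam a - lam b) ^ 2)⁻¹) • ρ (EF b a * EF a b - EF b b) := by
  obtain ⟨hne0, hinj⟩ := hlam
  have hne : lam a - lam b ≠ 0 := sub_ne_zero.mpr (fun h => hab (hinj h))
  have hne' : lam b - lam a ≠ 0 := sub_ne_zero.mpr (fun h => hab (hinj h).symm)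
  -- the derivative of the scalar coefficient
  have hderiv : ∀ (x y : ℂ), x - y ≠ 0 →
      HasDerivAt (fun t : ℂ => t / (x - t)) (x / (x - y) ^ 2) y := by
    intro x y hxy
    have h := (hasDerivAt_id y).div ((hasDerivAt_const y x).sub (hasDerivAt_id y)) hxy
    exact h.congr_deriv (by simp only [Pi.sub_apply, id_eq]; ring)
  -- general form of the derivative for one `L`
  have main : ∀ (a b : Fin N), a ≠ b → lam a - lam b ≠ 0 →
      HasDerivAt (fun t : ℂ => ρ (LF z (Function.update lam b t) a))
        (-((lam a / (lam a - lam b) ^ 2) • ρ (EF a b * EF b a - EF a a))) (lam b) := by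
    intro a b hab hne
    have hfun : (fun t : ℂ => ρ (LF z (Function.update lam b t) a))
        = fun t : ℂ => ρ (LF z (Function.update lam b 0) a)
            - (t / (lam a - t)) • ρ (EF a b * EF b a - EF a a) := by
      funext t
      rw [LF_update z lam a b (Ne.symm hab) t, map_sub, map_smul]
    rw [hfun]
    exact ((hderiv (lam a) (lam b) hne).smul_const
      (ρ (EF a b * EF b a - EF a a))).const_sub _
  refine ⟨-((lam a / (lam a - lam b) ^ 2) • ρ (EF a b * EF b a - EF a a)),
          -((lam b / (lam b - lam a) ^ 2) • ρ (EF b a * EF a b - EF b b)),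
          main a b hab hne, main b a (Ne.symm hab) hne', ?_, ?_, ?_⟩
  · rw [EF_comm a b hab]
    rw [smul_neg, smul_neg, smul_smul, smul_smul]
    congr 2
    rw [show (lam b - lam a) ^ 2 = (lam a - lam b) ^ 2 by ring]
    field_simp
  · rw [smul_neg, smul_smul]
    rw [show lam b * (lam a / (lam a - lam b) ^ 2)
        = (lam a * lam b) * ((lam a - lam b) ^ 2)⁻¹ by field_simp]
    rw [← neg_smul]
    ring_nf
  · rw [EF_comm a b hab]
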